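/- Le Cam's two-point lower bound: Let Q_1, Q_2 be two probability distributions in a class Q, let θ map distributions into a metric space with metric ρ, and let Y_1,...,Y_n be i.i.d. from some Q ∈ Q. Then inf over all estimators θ̂ of sup over Q ∈ Q of E_{Q^n}[ρ(θ̂, θ(Q))] is at least (1/8) ρ(θ(Q_1), θ(Q_2)) (1 - TV(Q_1,Q_2))^{2n}. -/

import Mathlib

open MeasureTheory
open scoped ENNReal

private lemma lintegral_pi_fin_prod {Ω : Type*} [MeasurableSpace Ω] (μ : Measure Ω)
    [SigmaFinite μ] :
    ∀ (n : ℕ) (f : Fin n → Ω → ℝ≥0∞), (∀ i, Measurable (f i)) →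
      ∫⁻ x, ∏ i, f i (x i) ∂(Measure.pi fun _ : Fin n => μ) = ∏ i, ∫⁻ x, f i x ∂μ := by
  intro n
  induction n with
  | zero => intro f hf; simp
  | succ n ih =>
    intro f hf
    have h := measurePreserving_piFinSuccAbove (fun _ : Fin (n + 1) => μ) 0
    have hprod : Measurable fun z : Fin n → Ω => ∏ i, f i.succ (z i) :=
      Finset.measurable_prod _ fun i _ => (hf i.succ).comp (measurable_pi_apply i)
    have hg : Measurable fun z : Ω × (Fin n → Ω) => f 0 z.1 * ∏ i, f i.succ (z.2 i) :=
      ((hf 0).comp measurable_fst).mul (hprod.comp measurable_snd)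
    calc ∫⁻ x, ∏ i, f i (x i) ∂(Measure.pi fun _ : Fin (n + 1) => μ)
        = ∫⁻ z : Ω × (Fin n → Ω), f 0 z.1 * ∏ i, f i.succ (z.2 i)
            ∂(μ.prod (Measure.pi fun _ : Fin n => μ)) := by
          rw [← h.lintegral_comp hg]
          refine lintegral_congr fun x => ?_
          rw [Fin.prod_univ_succ]
          simp [MeasurableEquiv.piFinSuccAbove, Fin.zero_succAbove, Fin.tail]
      _ = (∫⁻ x, f 0 x ∂μ) * ∏ i : Fin n, ∫⁻ x, f i.succ x ∂μ := by
          rw [lintegral_prod_mul (hf 0).aemeasurable hprod.aemeasurable,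
            ih _ fun i => hf i.succ]
      _ = ∏ i, ∫⁻ x, f i x ∂μ := (Fin.prod_univ_succ fun i => ∫⁻ x, f i x ∂μ).symm

private lemma pi_withDensity_fin {Ω : Type*} [MeasurableSpace Ω] (μ : Measure Ω)
    [SigmaFinite μ] (f : Ω → ℝ≥0∞) (hf : Measurable f) (n : ℕ) [SigmaFinite (μ.withDensity f)] :
    Measure.pi (fun _ : Fin n => μ.withDensity f)
      = (Measure.pi fun _ : Fin n => μ).withDensity fun x => ∏ i, f (x i) := by
  refine Measure.pi_eq (μ := fun _ : Fin n => μ.withDensity f) fun s hs => ?_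
  rw [withDensity_apply _ (MeasurableSet.univ_pi hs),
    ← lintegral_indicator (MeasurableSet.univ_pi hs)]
  have key : ∀ x : Fin n → Ω, (Set.univ.pi s).indicator (fun x => ∏ i, f (x i)) x
      = ∏ i, (s i).indicator f (x i) := by
    intro x
    by_cases hx : x ∈ Set.univ.pi s
    · rw [Set.indicator_of_mem hx]
      exact Finset.prod_congr rfl fun i _ => (Set.indicator_of_mem (hx i trivial) f).symm
    · rw [Set.indicator_of_notMem hx]
      simp only [Set.mem_pi, Set.mem_univ, forall_true_left] at hx
      push_neg at hx
      obtain ⟨i, hi⟩ := hx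
      exact (Finset.prod_eq_zero (Finset.mem_univ i) (Set.indicator_of_notMem hi f)).symm
  simp_rw [key]
  rw [lintegral_pi_fin_prod μ n _ fun i => hf.indicator (hs i)]
  exact Finset.prod_congr rfl fun i _ => by
    rw [lintegral_indicator (hs i), withDensity_apply _ (hs i)]
/-- Le Cam's two-point lower bound. Let `𝒬` be a class of probability distributions on a
sample space `Ω` containing `Q₁` and `Q₂`, let `θ` map distributions into a metric space
`Θ`, and let the data `Y₁, …, Yₙ` be i.i.d. from some `Q ∈ 𝒬` (with joint law the product
measure `Q^n`). Then for every (measurable) estimator `θ̂ : Ωⁿ → Θ`, the worst-case risk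
over `𝒬` is at least `(1/8) ρ(θ(Q₁), θ(Q₂)) (1 - TV(Q₁, Q₂))^{2n}`: there is a `Q ∈ 𝒬`
whose risk is at least this bound. (The risk is written as a lower Lebesgue integral so
that estimators with non-integrable risk are covered.) -/
theorem le_cam_two_point_lower_bound
    {Ω : Type*} [MeasurableSpace Ω] {Θ : Type*} [MetricSpace Θ] [MeasurableSpace Θ]
    [BorelSpace Θ]
    (𝒬 : Set (Measure Ω)) (θ : Measure Ω → Θ)
    (Q₁ Q₂ : Measure Ω) [IsProbabilityMeasure Q₁] [IsProbabilityMeasure Q₂]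
    (hQ₁ : Q₁ ∈ 𝒬) (hQ₂ : Q₂ ∈ 𝒬)
    (tv : ℝ)
    (htv : tv = ⨆ A : {A : Set Ω // MeasurableSet A},
      |(Q₁ A.1).toReal - (Q₂ A.1).toReal|)
    (n : ℕ) (est : (Fin n → Ω) → Θ) (hest : Measurable est) :
    ∃ Q ∈ 𝒬, ENNReal.ofReal
        ((1 / 8) * dist (θ Q₁) (θ Q₂) * (1 - tv) ^ (2 * n)) ≤
      ∫⁻ y, ENNReal.ofReal (dist (est y) (θ Q)) ∂(Measure.pi fun _ : Fin n => Q) := by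
  classical
  set δ := dist (θ Q₁) (θ Q₂) with hδ
  have hδ0 : 0 ≤ δ := dist_nonneg
  -- `tv` bounds
  have habs : ∀ A : {A : Set Ω // MeasurableSet A},
      |(Q₁ A.1).toReal - (Q₂ A.1).toReal| ≤ 1 := by
    intro A
    have h1 : (Q₁ A.1).toReal ≤ 1 :=
      (ENNReal.toReal_mono ENNReal.one_ne_top prob_le_one).trans_eq ENNReal.toReal_one
    have h2 : (Q₂ A.1).toReal ≤ 1 :=
      (ENNReal.toReal_mono ENNReal.one_ne_top prob_le_one).trans_eq ENNReal.toReal_one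
    have h3 : 0 ≤ (Q₁ A.1).toReal := ENNReal.toReal_nonneg
    have h4 : 0 ≤ (Q₂ A.1).toReal := ENNReal.toReal_nonneg
    rw [abs_sub_le_iff]; constructor <;> linarith
  have hbdd : BddAbove (Set.range fun A : {A : Set Ω // MeasurableSet A} =>
      |(Q₁ A.1).toReal - (Q₂ A.1).toReal|) := ⟨1, by rintro x ⟨A, rfl⟩; exact habs A⟩
  have htv_ge : ∀ A : Set Ω, MeasurableSet A →
      |(Q₁ A).toReal - (Q₂ A).toReal| ≤ tv := by
    intro A hA; rw [htv]; exact le_ciSup hbdd ⟨A, hA⟩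
  have htv0 : 0 ≤ tv := (abs_nonneg _).trans (htv_ge ∅ MeasurableSet.empty)
  have htv1 : tv ≤ 1 := by rw [htv]; exact ciSup_le habs
  -- densities w.r.t. μ = Q₁ + Q₂
  set μ : Measure Ω := Q₁ + Q₂ with hμ
  have hac1 : Q₁ ≪ μ := Measure.absolutelyContinuous_of_le (by rw [hμ]; exact Measure.le_add_right le_rfl)
  have hac2 : Q₂ ≪ μ := Measure.absolutelyContinuous_of_le (by rw [hμ]; exact Measure.le_add_left le_rfl)
  set p := Q₁.rnDeriv μ with hpdef
  set q := Q₂.rnDeriv μ with hqdef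
  have hp : Measurable p := Measure.measurable_rnDeriv _ _
  have hq : Measurable q := Measure.measurable_rnDeriv _ _
  have hQ1d : μ.withDensity p = Q₁ := Measure.withDensity_rnDeriv_eq _ _ hac1
  have hQ2d : μ.withDensity q = Q₂ := Measure.withDensity_rnDeriv_eq _ _ hac2
  set m : Ω → ℝ≥0∞ := fun x => min (p x) (q x) with hmdef
  have hm : Measurable m := hp.min hq
  set r := ∫⁻ x, m x ∂μ with hrdef
  -- Step A : ofReal (1 - tv) ≤ r
  have stepA : ENNReal.ofReal (1 - tv) ≤ r := by
    set A := {x | p x < q x} with hAdef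
    have hA : MeasurableSet A := measurableSet_lt hp hq
    have h2 : ∫⁻ x in A, m x ∂μ = Q₁ A := by
      rw [← hQ1d, withDensity_apply _ hA]
      exact setLIntegral_congr_fun hA (fun x hx =>
        min_eq_left (le_of_lt hx))
    have h3 : ∫⁻ x in Aᶜ, m x ∂μ = Q₂ Aᶜ := by
      rw [← hQ2d, withDensity_apply _ hA.compl]
      exact setLIntegral_congr_fun hA.compl (fun x hx =>
        min_eq_right (le_of_not_gt hx))
    have hr : r = Q₁ A + Q₂ Aᶜ := by
      rw [hrdef, ← lintegral_add_compl _ hA, h2, h3]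
    rw [hr, ← ENNReal.ofReal_toReal (measure_ne_top Q₁ A),
      ← ENNReal.ofReal_toReal (measure_ne_top Q₂ Aᶜ),
      ← ENNReal.ofReal_add ENNReal.toReal_nonneg ENNReal.toReal_nonneg]
    apply ENNReal.ofReal_le_ofReal
    have hc : (Q₂ Aᶜ).toReal = 1 - (Q₂ A).toReal := by
      rw [measure_compl hA (measure_ne_top Q₂ A), measure_univ,
        ENNReal.toReal_sub_of_le prob_le_one ENNReal.one_ne_top, ENNReal.toReal_one]
    have habsA := htv_ge A hA
    have h5 : (Q₂ A).toReal - (Q₁ A).toReal ≤ tv := by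
      have := neg_abs_le ((Q₁ A).toReal - (Q₂ A).toReal)
      linarith
    linarith
  -- Step B : key inequality for product measures
  haveI : SigmaFinite (μ.withDensity p) := by rw [hQ1d]; infer_instance
  haveI : SigmaFinite (μ.withDensity q) := by rw [hQ2d]; infer_instance
  have hpi1 : (Measure.pi fun _ : Fin n => Q₁)
      = (Measure.pi fun _ : Fin n => μ).withDensity fun x => ∏ i, p (x i) := by
    conv_lhs => rw [← hQ1d]
    exact pi_withDensity_fin μ p hp n
  have hpi2 : (Measure.pi fun _ : Fin n => Q₂)
      = (Measure.pi fun _ : Fin n => μ).withDensity fun x => ∏ i, q (x i) := by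
    conv_lhs => rw [← hQ2d]
    exact pi_withDensity_fin μ q hq n
  have hkey : ∀ B : Set (Fin n → Ω), MeasurableSet B →
      r ^ n ≤ (Measure.pi fun _ : Fin n => Q₁) B + (Measure.pi fun _ : Fin n => Q₂) Bᶜ := by
    intro B hB
    have hr : r ^ n = ∫⁻ x, ∏ i, m (x i) ∂(Measure.pi fun _ : Fin n => μ) := by
      rw [lintegral_pi_fin_prod μ n (fun _ => m) fun _ => hm, Finset.prod_const,
        Finset.card_univ, Fintype.card_fin]
    have hmp : Measurable fun x : Fin n → Ω => ∏ i, p (x i) :=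
      Finset.measurable_prod _ fun i _ => hp.comp (measurable_pi_apply i)
    have hmq : Measurable fun x : Fin n → Ω => ∏ i, q (x i) :=
      Finset.measurable_prod _ fun i _ => hq.comp (measurable_pi_apply i)
    calc r ^ n
        = ∫⁻ x in B, ∏ i, m (x i) ∂(Measure.pi fun _ : Fin n => μ)
          + ∫⁻ x in Bᶜ, ∏ i, m (x i) ∂(Measure.pi fun _ : Fin n => μ) := by
          rw [hr, ← lintegral_add_compl _ hB]
      _ ≤ ∫⁻ x in B, ∏ i, p (x i) ∂(Measure.pi fun _ : Fin n => μ)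
          + ∫⁻ x in Bᶜ, ∏ i, q (x i) ∂(Measure.pi fun _ : Fin n => μ) := by
          refine add_le_add (setLIntegral_mono hmp fun x _ => ?_)
            (setLIntegral_mono hmq fun x _ => ?_)
          · exact Finset.prod_le_prod' fun i _ => min_le_left _ _
          · exact Finset.prod_le_prod' fun i _ => min_le_right _ _
      _ = (Measure.pi fun _ : Fin n => Q₁) B + (Measure.pi fun _ : Fin n => Q₂) Bᶜ := by
          rw [hpi1, hpi2, withDensity_apply _ hB, withDensity_apply _ hB.compl]
  -- Step C : risk bounds
  set B : Set (Fin n → Ω) := {y | δ / 2 ≤ dist (est y) (θ Q₁)} with hBdef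
  have hdmeas : Measurable fun y => dist (est y) (θ Q₁) :=
    (Continuous.measurable (continuous_id.dist continuous_const)).comp hest
  have hB : MeasurableSet B := measurableSet_le measurable_const hdmeas
  set risk1 := ∫⁻ y, ENNReal.ofReal (dist (est y) (θ Q₁)) ∂(Measure.pi fun _ : Fin n => Q₁)
    with hr1def
  set risk2 := ∫⁻ y, ENNReal.ofReal (dist (est y) (θ Q₂)) ∂(Measure.pi fun _ : Fin n => Q₂)
    with hr2def
  have hrb1 : ENNReal.ofReal (δ / 2) * (Measure.pi fun _ : Fin n => Q₁) B ≤ risk1 := by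
    calc ENNReal.ofReal (δ / 2) * (Measure.pi fun _ : Fin n => Q₁) B
        = ∫⁻ _ in B, ENNReal.ofReal (δ / 2) ∂(Measure.pi fun _ : Fin n => Q₁) :=
          (setLIntegral_const _ _).symm
      _ ≤ ∫⁻ y in B, ENNReal.ofReal (dist (est y) (θ Q₁))
            ∂(Measure.pi fun _ : Fin n => Q₁) :=
          setLIntegral_mono hdmeas.ennreal_ofReal fun y hy => ENNReal.ofReal_le_ofReal hy
      _ ≤ risk1 := setLIntegral_le_lintegral _ _
  have hrb2 : ENNReal.ofReal (δ / 2) * (Measure.pi fun _ : Fin n => Q₂) Bᶜ ≤ risk2 := by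
    calc ENNReal.ofReal (δ / 2) * (Measure.pi fun _ : Fin n => Q₂) Bᶜ
        = ∫⁻ _ in Bᶜ, ENNReal.ofReal (δ / 2) ∂(Measure.pi fun _ : Fin n => Q₂) :=
          (setLIntegral_const _ _).symm
      _ ≤ ∫⁻ y in Bᶜ, ENNReal.ofReal (dist (est y) (θ Q₂))
            ∂(Measure.pi fun _ : Fin n => Q₂) := by
          refine setLIntegral_mono ((Continuous.measurable (continuous_id.dist continuous_const)).comp hest).ennreal_ofReal fun y hy => ?_
          refine ENNReal.ofReal_le_ofReal ?_
          have h1 : dist (est y) (θ Q₁) < δ / 2 := lt_of_not_ge hy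
          have h2 : δ ≤ dist (θ Q₁) (est y) + dist (est y) (θ Q₂) := dist_triangle _ _ _
          rw [dist_comm (θ Q₁) (est y)] at h2
          linarith
      _ ≤ risk2 := setLIntegral_le_lintegral _ _
  -- assemble
  have hsum : ENNReal.ofReal (δ / 2 * (1 - tv) ^ n) ≤ risk1 + risk2 := by
    have hcn : ENNReal.ofReal (1 - tv) ^ n ≤ r ^ n := pow_le_pow_left' stepA n
    calc ENNReal.ofReal (δ / 2 * (1 - tv) ^ n)
        = ENNReal.ofReal (δ / 2) * ENNReal.ofReal (1 - tv) ^ n := by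
          rw [ENNReal.ofReal_mul (by positivity), ENNReal.ofReal_pow (by linarith)]
      _ ≤ ENNReal.ofReal (δ / 2) *
            ((Measure.pi fun _ : Fin n => Q₁) B + (Measure.pi fun _ : Fin n => Q₂) Bᶜ) :=
          mul_le_mul_right (hcn.trans (hkey B hB)) _
      _ = ENNReal.ofReal (δ / 2) * (Measure.pi fun _ : Fin n => Q₁) B
          + ENNReal.ofReal (δ / 2) * (Measure.pi fun _ : Fin n => Q₂) Bᶜ := mul_add _ _ _
      _ ≤ risk1 + risk2 := add_le_add hrb1 hrb2
  have hreal : 2 * (1 / 8 * δ * (1 - tv) ^ (2 * n)) ≤ δ / 2 * (1 - tv) ^ n := by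
    have h1tv : (0:ℝ) ≤ 1 - tv := by linarith
    have hp1 : (1 - tv) ^ (2 * n) ≤ (1 - tv) ^ n := by
      calc (1 - tv) ^ (2 * n) = (1 - tv) ^ n * (1 - tv) ^ n := by rw [two_mul, pow_add]
        _ ≤ (1 - tv) ^ n * 1 :=
          mul_le_mul_of_nonneg_left (pow_le_one₀ h1tv (by linarith)) (pow_nonneg h1tv n)
        _ = (1 - tv) ^ n := mul_one _
    nlinarith [pow_nonneg h1tv (2 * n), pow_nonneg h1tv n]
  have hmain : ∀ risk : ℝ≥0∞, risk1 + risk2 ≤ 2 * risk →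
      ENNReal.ofReal (1 / 8 * δ * (1 - tv) ^ (2 * n)) ≤ risk := by
    intro risk hrisk
    have h2 : ENNReal.ofReal (1 / 8 * δ * (1 - tv) ^ (2 * n)) * 2 ≤ risk * 2 := by
      calc ENNReal.ofReal (1 / 8 * δ * (1 - tv) ^ (2 * n)) * 2
          = ENNReal.ofReal (2 * (1 / 8 * δ * (1 - tv) ^ (2 * n))) := by
            rw [mul_comm, ← ENNReal.ofReal_ofNat 2, ← ENNReal.ofReal_mul (by norm_num)]
        _ ≤ ENNReal.ofReal (δ / 2 * (1 - tv) ^ n) := ENNReal.ofReal_le_ofReal hreal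
        _ ≤ risk1 + risk2 := hsum
        _ ≤ 2 * risk := hrisk
        _ = risk * 2 := mul_comm _ _
    exact (ENNReal.mul_le_mul_iff_left (by norm_num) (by norm_num)).mp h2
  rcases le_total risk1 risk2 with hle | hle
  · exact ⟨Q₂, hQ₂, hmain risk2 (by rw [two_mul]; exact add_le_add hle le_rfl)⟩
  · exact ⟨Q₁, hQ₁, hmain risk1 (by rw [two_mul]; exact add_le_add le_rfl hle)⟩
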